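/- Let L be a finite-dimensional complex Lie algebra with a nondegenerate symmetric ℂ-bilinear form B, let g be a real slice of (L,B), and suppose there exists a compact real form u of (L,B). Then there exists a Cartan involution of Lie algebras θ : g → g of the restriction of B to g. -/

import Mathlib

/-!
Setup: a finite-dimensional complex Lie algebra `L` with a nondegenerate symmetric
`ℂ`-bilinear form `B` (a "holomorphic inner product"), viewed also as a real Lie algebra.
-/

variable {L : Type*} [LieRing L] [LieAlgebra ℂ L]

/-- A complex Lie algebra is in particular a real Lie algebra. -/
noncomputable instance instLieAlgebraRealOfComplex : LieAlgebra ℝ L :=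
  { (inferInstance : Module ℝ L) with
    lie_smul := fun t x y => by
      rw [show t • y = (t : ℂ) • y from rfl, lie_smul,
        show (t : ℂ) • ⁅x, y⁆ = t • ⁅x, y⁆ from rfl] }

/-- `g` is a real form of the complex Lie algebra `L`:
`g ∩ i • g = {0}` and `g + i • g = L`. -/
def IsRealForm (g : LieSubalgebra ℝ L) : Prop :=
  (∀ x ∈ g, ∀ y ∈ g, x = Complex.I • y → x = 0) ∧
  (∀ z : L, ∃ x ∈ g, ∃ y ∈ g, z = x + Complex.I • y)

/-- `g` is a real slice of `(L, B)`: a real form of `L` on which `B` is real-valued. -/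
def IsRealSlice (B : LinearMap.BilinForm ℂ L) (g : LieSubalgebra ℝ L) : Prop :=
  IsRealForm g ∧ ∀ x ∈ g, ∀ y ∈ g, (B x y).im = 0

/-- A compact real form of `(L, B)`: a real slice on which `B` is positive definite. -/
def IsCompactRealForm (B : LinearMap.BilinForm ℂ L) (u : LieSubalgebra ℝ L) : Prop :=
  IsRealSlice B u ∧ ∀ x ∈ u, x ≠ 0 → 0 < (B x x).re

/-- A Cartan involution of the metric `B|g`: an `ℝ`-linear involution `θ` of `g` such that
`(x, y) ↦ B x (θ y)` is a positive-definite (real-valued, symmetric) inner product on `g`. -/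
def IsCartanInvolutionOfMetric (B : LinearMap.BilinForm ℂ L) (g : LieSubalgebra ℝ L)
    (θ : ↥g →ₗ[ℝ] ↥g) : Prop :=
  (∀ x, θ (θ x) = x) ∧
  (∀ x y : ↥g, B (θ x : L) (y : L) = B (x : L) (θ y : L)) ∧
  (∀ x : ↥g, x ≠ 0 → 0 < (B (x : L) (θ x : L)).re)

/-- A Cartan involution of Lie algebras of the metric `B|g`: a Cartan involution of the
metric which is moreover a Lie algebra automorphism of `g`. -/
def IsCartanInvolutionOfLieAlgebras (B : LinearMap.BilinForm ℂ L) (g : LieSubalgebra ℝ L)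
    (θ : ↥g →ₗ[ℝ] ↥g) : Prop :=
  IsCartanInvolutionOfMetric B g θ ∧ ∀ x y : ↥g, θ ⁅x, y⁆ = ⁅θ x, θ y⁆

private lemma exists_conj (B : LinearMap.BilinForm ℂ L) (g : LieSubalgebra ℝ L)
    (hg : IsRealSlice B g) :
    ∃ σ : L →ₗ[ℝ] L,
      (∀ x y : L, x ∈ g → y ∈ g → σ (x + Complex.I • y) = x - Complex.I • y) ∧
      (∀ z, σ (σ z) = z) ∧
      (∀ z, σ (Complex.I • z) = -(Complex.I • σ z)) ∧
      (∀ z, σ z = z ↔ z ∈ g) ∧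
      (∀ x y, σ ⁅x, y⁆ = ⁅σ x, σ y⁆) ∧
      (∀ x y, B (σ x) (σ y) = (starRingEnd ℂ) (B x y)) := by
  obtain ⟨⟨h₁, h₂⟩, hre⟩ := hg
  set J : L →ₗ[ℝ] L := ((LinearMap.lsmul ℂ L) Complex.I).restrictScalars ℝ with hJ
  have hJapp : ∀ z : L, J z = Complex.I • z := fun z => rfl
  set S : Submodule ℝ L := g.toSubmodule with hS
  set F : (↥S × ↥S) →ₗ[ℝ] L :=
    (S.subtype.comp (LinearMap.fst ℝ ↥S ↥S)) +
      (J.comp (S.subtype.comp (LinearMap.snd ℝ ↥S ↥S))) with hF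
  have hFapp : ∀ p : ↥S × ↥S, F p = (p.1 : L) + Complex.I • (p.2 : L) := fun p => rfl
  have hsmulI : ∀ y : L, Complex.I • y = 0 → y = 0 := by
    intro y hy
    have := smul_eq_zero.mp hy
    simpa [Complex.I_ne_zero] using this
  have hFinj : Function.Injective F := by
    rw [injective_iff_map_eq_zero]
    intro p hp
    rw [hFapp] at hp
    have hx : (p.1 : L) = Complex.I • (-(p.2) : ↥S) := by
      push_cast
      rw [smul_neg]
      linear_combination (norm := module) hp
    have hx0 : (p.1 : L) = 0 := h₁ _ p.1.2 _ (-p.2).2 hx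
    have hy0 : (p.2 : L) = 0 := by
      apply hsmulI
      rw [hx0, zero_add] at hp; exact hp
    ext
    · exact hx0
    · exact hy0
  have hFsurj : Function.Surjective F := by
    intro z
    obtain ⟨x, hx, y, hy, hz⟩ := h₂ z
    exact ⟨(⟨x, hx⟩, ⟨y, hy⟩), hz.symm⟩
  let e : (↥S × ↥S) ≃ₗ[ℝ] L := LinearEquiv.ofBijective F ⟨hFinj, hFsurj⟩
  set G : (↥S × ↥S) →ₗ[ℝ] L :=
    (S.subtype.comp (LinearMap.fst ℝ ↥S ↥S)) -
      (J.comp (S.subtype.comp (LinearMap.snd ℝ ↥S ↥S))) with hG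
  have hGapp : ∀ p : ↥S × ↥S, G p = (p.1 : L) - Complex.I • (p.2 : L) := fun p => rfl
  set σ : L →ₗ[ℝ] L := G.comp (e.symm : L →ₗ[ℝ] (↥S × ↥S)) with hσ
  have key : ∀ x y : L, x ∈ g → y ∈ g → σ (x + Complex.I • y) = x - Complex.I • y := by
    intro x y hx hy
    have he : e ((⟨x, hx⟩ : ↥S), (⟨y, hy⟩ : ↥S)) = x + Complex.I • y := rfl
    have : σ (x + Complex.I • y) = G (e.symm (e ((⟨x, hx⟩ : ↥S), (⟨y, hy⟩ : ↥S)))) := by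
      rw [he]; rfl
    rw [this, e.symm_apply_apply, hGapp]
  have hσσ : ∀ z, σ (σ z) = z := by
    intro z
    obtain ⟨x, hx, y, hy, hz⟩ := h₂ z
    rw [hz, key x y hx hy, show x - Complex.I • y = x + Complex.I • (-y) by
      rw [smul_neg]; abel, key x (-y) hx (neg_mem hy)]
    rw [smul_neg, sub_neg_eq_add]
  have hσI : ∀ z, σ (Complex.I • z) = -(Complex.I • σ z) := by
    intro z
    obtain ⟨x, hx, y, hy, hz⟩ := h₂ z
    rw [hz, key x y hx hy]
    have h1 : Complex.I • (x + Complex.I • y) = -y + Complex.I • x := by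
      rw [smul_add, smul_smul, Complex.I_mul_I, neg_one_smul]; abel
    rw [h1, key (-y) x (neg_mem hy) hx, smul_sub, smul_smul, Complex.I_mul_I, neg_one_smul]
    abel
  have hfix : ∀ z, σ z = z ↔ z ∈ g := by
    intro z
    constructor
    · intro hf
      obtain ⟨x, hx, y, hy, hz⟩ := h₂ z
      rw [hz, key x y hx hy] at hf
      have h2 : (2 : ℂ) • (Complex.I • y) = 0 := by
        have := hf
        rw [two_smul]
        linear_combination (norm := module) -this
      have hy0 : y = 0 := hsmulI y (by
        rcases smul_eq_zero.mp h2 with h | h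
        · exact absurd h two_ne_zero
        · exact h)
      rw [hz, hy0, smul_zero, add_zero]; exact hx
    · intro hmem
      have := key z 0 hmem (zero_mem _)
      rw [smul_zero, add_zero, sub_zero] at this
      exact this
  have hlie : ∀ x y, σ ⁅x, y⁆ = ⁅σ x, σ y⁆ := by
    intro z w
    obtain ⟨x, hx, y, hy, hz⟩ := h₂ z
    obtain ⟨x', hx', y', hy', hw⟩ := h₂ w
    have hb : ⁅x + Complex.I • y, x' + Complex.I • y'⁆ =
        (⁅x, x'⁆ - ⁅y, y'⁆) + Complex.I • (⁅x, y'⁆ + ⁅y, x'⁆) := by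
      simp only [lie_add, add_lie, lie_smul, smul_lie, smul_add, smul_smul,
        Complex.I_mul_I, neg_one_smul]
      abel
    have hm1 : ⁅x, x'⁆ - ⁅y, y'⁆ ∈ g := sub_mem (g.lie_mem hx hx') (g.lie_mem hy hy')
    have hm2 : ⁅x, y'⁆ + ⁅y, x'⁆ ∈ g := add_mem (g.lie_mem hx hy') (g.lie_mem hy hx')
    rw [hz, hw, hb, key _ _ hm1 hm2, key x y hx hy, key x' y' hx' hy']
    simp only [lie_sub, sub_lie, lie_smul, smul_lie, smul_sub, smul_smul,
      Complex.I_mul_I, neg_one_smul]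
    module
  refine ⟨σ, key, hσσ, hσI, hfix, hlie, ?_⟩
  intro z w
  obtain ⟨x, hx, y, hy, hz⟩ := h₂ z
  obtain ⟨x', hx', y', hy', hw⟩ := h₂ w
  have ha : (starRingEnd ℂ) (B x x') = B x x' := Complex.conj_eq_iff_im.mpr (hre _ hx _ hx')
  have hb2 : (starRingEnd ℂ) (B x y') = B x y' := Complex.conj_eq_iff_im.mpr (hre _ hx _ hy')
  have hc2 : (starRingEnd ℂ) (B y x') = B y x' := Complex.conj_eq_iff_im.mpr (hre _ hy _ hx')
  have hd2 : (starRingEnd ℂ) (B y y') = B y y' := Complex.conj_eq_iff_im.mpr (hre _ hy _ hy')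
  rw [hz, hw, key x y hx hy, key x' y' hx' hy']
  simp only [map_add, map_sub, map_smul, LinearMap.add_apply, LinearMap.sub_apply,
    LinearMap.smul_apply, smul_eq_mul, map_mul, Complex.conj_I, ha, hb2, hc2, hd2]
  ring

open Complex in
private lemma exists_aligned_conj [FiniteDimensional ℂ L]
    (B : LinearMap.BilinForm ℂ L) (hBsymm : ∀ x y : L, B x y = B y x)
    (σ τ : L →ₗ[ℝ] L)
    (hσσ : ∀ z, σ (σ z) = z) (hσI : ∀ z, σ (Complex.I • z) = -(Complex.I • σ z))
    (hσlie : ∀ x y, σ ⁅x, y⁆ = ⁅σ x, σ y⁆)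
    (hσB : ∀ x y, B (σ x) (σ y) = (starRingEnd ℂ) (B x y))
    (hττ : ∀ z, τ (τ z) = z) (hτI : ∀ z, τ (Complex.I • z) = -(Complex.I • τ z))
    (hτlie : ∀ x y, τ ⁅x, y⁆ = ⁅τ x, τ y⁆)
    (hτB : ∀ x y, B (τ x) (τ y) = (starRingEnd ℂ) (B x y))
    (hτpos : ∀ z : L, z ≠ 0 → 0 < (B z (τ z)).re) :
    ∃ τ' : L →ₗ[ℝ] L,
      (∀ z, τ' (τ' z) = z) ∧
      (∀ z, τ' (Complex.I • z) = -(Complex.I • τ' z)) ∧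
      (∀ x y, τ' ⁅x, y⁆ = ⁅τ' x, τ' y⁆) ∧
      (∀ x y, B (τ' x) (τ' y) = (starRingEnd ℂ) (B x y)) ∧
      (∀ z : L, z ≠ 0 → 0 < (B z (τ' z)).re) ∧
      (∀ z, σ (τ' z) = τ' (σ z)) := by
  -- decomposition of complex scalars
  have hdecomp : ∀ (c : ℂ) (z : L), c • z = c.re • z + c.im • (Complex.I • z) := by
    intro c z
    rw [← Complex.coe_smul, ← Complex.coe_smul, smul_smul, ← add_smul, Complex.re_add_im]
  have hσc : ∀ (c : ℂ) (z : L), σ (c • z) = (starRingEnd ℂ) c • σ z := by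
    intro c z
    rw [hdecomp c z, map_add, LinearMap.map_smul, LinearMap.map_smul, hσI,
      hdecomp ((starRingEnd ℂ) c) (σ z)]
    simp only [Complex.conj_re, Complex.conj_im, smul_neg, neg_smul]
  have hτc : ∀ (c : ℂ) (z : L), τ (c • z) = (starRingEnd ℂ) c • τ z := by
    intro c z
    rw [hdecomp c z, map_add, LinearMap.map_smul, LinearMap.map_smul, hτI,
      hdecomp ((starRingEnd ℂ) c) (τ z)]
    simp only [Complex.conj_re, Complex.conj_im, smul_neg, neg_smul]
  -- the complex-linear operators P = σ∘τ, Pinv = τ∘σ, Q = P².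
  have hcl : ∀ (F : L →ₗ[ℝ] L), (∀ z, F (Complex.I • z) = Complex.I • F z) →
      ∀ (c : ℂ) (z : L), F (c • z) = c • F z := by
    intro F hFI c z
    rw [hdecomp c z, map_add, LinearMap.map_smul, LinearMap.map_smul, hFI, hdecomp c (F z)]
  let P : L →ₗ[ℂ] L :=
    { toFun := fun z => σ (τ z), map_add' := by intro a b; simp,
      map_smul' := by
        intro c z
        simp only [RingHom.id_apply]
        exact hcl (σ.comp τ) (fun w => by simp [hτI, hσI]) c z }
  let Pinv : L →ₗ[ℂ] L :=
    { toFun := fun z => τ (σ z), map_add' := by intro a b; simp,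
      map_smul' := by
        intro c z
        simp only [RingHom.id_apply]
        exact hcl (τ.comp σ) (fun w => by simp [hτI, hσI]) c z }
  let Q : L →ₗ[ℂ] L := P ∘ₗ P
  have hPinvP : ∀ z, Pinv (P z) = z := by
    intro z; show τ (σ (σ (τ z))) = z; rw [hσσ, hττ]
  have hPPinv : ∀ z, P (Pinv z) = z := by
    intro z; show σ (τ (τ (σ z))) = z; rw [hττ, hσσ]
  -- B-adjointness of P
  have hBP : ∀ x y, B (P x) y = B x (Pinv y) := by
    intro x y
    calc B (P x) y = B (σ (τ x)) (σ (σ y)) := by rw [hσσ]; rfl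
      _ = (starRingEnd ℂ) (B (τ x) (σ y)) := hσB _ _
      _ = (starRingEnd ℂ) (B (τ x) (τ (τ (σ y)))) := by rw [hττ]
      _ = (starRingEnd ℂ) ((starRingEnd ℂ) (B x (τ (σ y)))) := by rw [hτB]
      _ = B x (Pinv y) := Complex.conj_conj _
  have hBQ : ∀ x y, B (Q x) y = B x (Pinv (Pinv y)) := by
    intro x y
    show B (P (P x)) y = _
    rw [hBP, hBP]
  -- the H-inner-product symmetry of P
  have hHP : ∀ a b, B (P a) (τ b) = B a (τ (P b)) := by
    intro a b
    calc B (P a) (τ b) = B (σ (τ a)) (σ (σ (τ b))) := by rw [hσσ]; rfl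
      _ = (starRingEnd ℂ) (B (τ a) (σ (τ b))) := hσB _ _
      _ = (starRingEnd ℂ) (B (τ a) (τ (τ (σ (τ b))))) := by rw [hττ]
      _ = (starRingEnd ℂ) ((starRingEnd ℂ) (B a (τ (σ (τ b))))) := by rw [hτB]
      _ = B a (τ (P b)) := Complex.conj_conj _
  have hHQ : ∀ a b, B (Q a) (τ b) = B a (τ (Q b)) := by
    intro a b
    show B (P (P a)) (τ b) = _
    rw [hHP, hHP]; rfl
  -- conjugate symmetry and positivity of H(x,y) = B x (τ y)
  have hHconj : ∀ x y, (starRingEnd ℂ) (B x (τ y)) = B y (τ x) := by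
    intro x y
    rw [← hτB, hττ, hBsymm]
  have hHreal : ∀ z, (B z (τ z)).im = 0 := by
    intro z
    have := hHconj z z
    rw [Complex.conj_eq_iff_im] at this
    · exact this
  -- spectral decomposition of Q
  obtain ⟨n, b, μ, hQb⟩ :
      ∃ (n : ℕ) (b : Module.Basis (Fin n) ℂ L) (μ : Fin n → ℝ),
        ∀ i, Q (b i) = (μ i : ℂ) • b i := by
    letI core : InnerProductSpace.Core ℂ L :=
      { inner := fun x y => B y (τ x)
        conj_inner_symm := fun x y => hHconj x y
        re_inner_nonneg := by
          intro x
          show 0 ≤ (B x (τ x)).re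
          rcases eq_or_ne x 0 with h | h
          · simp [h]
          · exact (hτpos x h).le
        add_left := by
          intro x y z
          show B z (τ (x + y)) = B z (τ x) + B z (τ y)
          rw [map_add, map_add]
        smul_left := by
          intro x y r
          show B y (τ (r • x)) = (starRingEnd ℂ) r * B y (τ x)
          rw [hτc, LinearMap.map_smul, smul_eq_mul]
        definite := by
          intro x hx
          by_contra h
          have h1 := hτpos x h
          have hx' : B x (τ x) = 0 := hx
          rw [hx'] at h1
          simp at h1 }
    letI : NormedAddCommGroup L := core.toNormedAddCommGroup
    letI : InnerProductSpace ℂ L := InnerProductSpace.ofCore core.toCore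
    have hsym : Q.IsSymmetric := by
      intro x y
      show B y (τ (Q x)) = B (Q y) (τ x)
      exact (hHQ y x).symm
    have hfr : Module.finrank ℂ L = Module.finrank ℂ L := rfl
    refine ⟨Module.finrank ℂ L, (hsym.eigenvectorBasis hfr).toBasis, hsym.eigenvalues hfr, ?_⟩
    intro i
    rw [OrthonormalBasis.coe_toBasis]
    exact hsym.apply_eigenvectorBasis hfr i
  have hbne : ∀ i, b i ≠ 0 := fun i => b.ne_zero i
  have hQb' : ∀ i, Q (b i) = μ i • b i := by
    intro i; rw [hQb i, Complex.coe_smul]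
  have hμpos : ∀ i, 0 < μ i := by
    intro i
    have hPne : P (b i) ≠ 0 := fun h => hbne i (by rw [← hPinvP (b i), h, map_zero])
    have h1 : 0 < (B (P (b i)) (τ (P (b i)))).re := hτpos _ hPne
    have h2 : B (P (b i)) (τ (P (b i))) = (μ i : ℂ) * B (b i) (τ (b i)) := by
      rw [hHP]
      show B (b i) (τ (Q (b i))) = _
      rw [hQb' i, LinearMap.map_smul, LinearMap.map_smul_of_tower]
      exact Complex.real_smul
    rw [h2] at h1
    rw [Complex.mul_re, Complex.ofReal_re, Complex.ofReal_im, hHreal, mul_zero, sub_zero] at h1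
    nlinarith [hτpos (b i) (hbne i)]
  -- fractional powers of Q
  set f : ℝ → (L →ₗ[ℂ] L) := fun t => b.constr ℂ (fun i => (μ i ^ t) • b i) with hfdef
  have hfb : ∀ (t : ℝ) i, f t (b i) = (μ i ^ t) • b i := fun t i => b.constr_basis ℂ _ i
  have eig_pow : ∀ (t lam : ℝ) (w : L), Q w = lam • w → f t w = (lam ^ t) • w := by
    intro t lam w hw
    have hrepr : ∑ i, b.repr w i • b i = w := b.sum_repr w
    have hco : ∀ i, b.repr w i * (μ i : ℂ) = b.repr w i * (lam : ℂ) := by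
      intro i
      have h1 : Q w = ∑ j, (b.repr w j * (μ j : ℂ)) • b j := by
        conv_lhs => rw [← hrepr]
        rw [map_sum]
        refine Finset.sum_congr rfl fun j _ => ?_
        rw [LinearMap.map_smul, hQb j, smul_smul]
      have h2 : Q w = ∑ j, (b.repr w j * (lam : ℂ)) • b j := by
        rw [hw]
        conv_lhs => rw [← hrepr]
        rw [Finset.smul_sum]
        refine Finset.sum_congr rfl fun j _ => ?_
        rw [smul_comm, ← Complex.coe_smul, smul_smul]
      have h3 := h1.symm.trans h2
      have h4 : (fun j => b.repr w j * (μ j : ℂ)) = (fun j => b.repr w j * (lam : ℂ)) := by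
        calc (fun j => b.repr w j * (μ j : ℂ))
            = ⇑(b.repr (∑ j, (b.repr w j * (μ j : ℂ)) • b j)) := (b.repr_sum_self _).symm
          _ = ⇑(b.repr (∑ j, (b.repr w j * (lam : ℂ)) • b j)) := by rw [← h3, ← h1, h2]
          _ = fun j => b.repr w j * (lam : ℂ) := b.repr_sum_self _
      exact congrFun h4 i
    calc f t w = f t (∑ i, b.repr w i • b i) := by rw [hrepr]
      _ = ∑ i, b.repr w i • ((μ i ^ t) • b i) := by
          rw [map_sum]
          exact Finset.sum_congr rfl fun i _ => by rw [LinearMap.map_smul, hfb]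
      _ = ∑ i, b.repr w i • ((lam ^ t) • b i) := by
          refine Finset.sum_congr rfl fun i _ => ?_
          rcases eq_or_ne (b.repr w i) 0 with h | h
          · rw [h, zero_smul, zero_smul]
          · have : (μ i : ℂ) = (lam : ℂ) := mul_left_cancel₀ h (hco i)
            rw [Complex.ofReal_inj.mp this]
      _ = (lam ^ t) • w := by
          conv_rhs => rw [← hrepr, Finset.smul_sum]
          exact Finset.sum_congr rfl fun i _ => (smul_comm _ _ _)
  have hf_comp : ∀ (s t : ℝ) z, f s (f t z) = f (s + t) z := by
    intro s t z
    have hmaps : (f s) ∘ₗ (f t) = f (s + t) := by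
      refine b.ext fun i => ?_
      rw [LinearMap.comp_apply, hfb, LinearMap.map_smul_of_tower, hfb, hfb, smul_smul,
        Real.rpow_add (hμpos i), mul_comm]
    exact LinearMap.congr_fun hmaps z
  have hf0 : ∀ z, f 0 z = z := by
    intro z
    have hmaps : f 0 = LinearMap.id := b.ext fun i => by
      rw [hfb, Real.rpow_zero, one_smul, LinearMap.id_apply]
    rw [hmaps, LinearMap.id_apply]
  have hf_cancel : ∀ (t : ℝ) z, f (-t) (f t z) = z := by
    intro t z; rw [hf_comp, neg_add_cancel, hf0]
  have hf_cancel' : ∀ (t : ℝ) z, f t (f (-t) z) = z := by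
    intro t z; rw [hf_comp, add_neg_cancel, hf0]
  -- interaction with σ
  have hQσb : ∀ i, Q (σ (b i)) = (μ i)⁻¹ • σ (b i) := by
    intro i
    have h1 : σ (Q (σ (Q (b i)))) = b i := by
      show σ (σ (τ (σ (τ (σ (σ (τ (σ (τ (b i)))))))))) = b i
      rw [hσσ (τ (σ (τ (b i)))), hττ (σ (τ (b i))), hσσ (τ (b i)), hττ (b i), hσσ]
    rw [hQb' i] at h1
    simp only [LinearMap.map_smul, LinearMap.map_smul_of_tower] at h1
    have h2 : σ (Q (σ (b i))) = (μ i)⁻¹ • b i := by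
      simpa [smul_smul, inv_mul_cancel₀ (hμpos i).ne'] using
        congrArg (fun v => (μ i)⁻¹ • v) h1
    have h3 := congrArg σ h2
    rw [hσσ, LinearMap.map_smul] at h3
    exact h3
  have hfσb : ∀ (t : ℝ) i, f t (σ (b i)) = (μ i ^ (-t)) • σ (b i) := by
    intro t i
    have h := eig_pow t ((μ i)⁻¹) (σ (b i)) (hQσb i)
    rwa [Real.inv_rpow (hμpos i).le, ← Real.rpow_neg (hμpos i).le] at h
  have hσf : ∀ (t : ℝ) z, σ (f t z) = f (-t) (σ z) := by
    intro t z
    let A : L →ₗ[ℂ] L :=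
      { toFun := fun w => σ (f t (σ w)),
        map_add' := by intro a c; simp,
        map_smul' := by
          intro c w
          simp only [RingHom.id_apply]
          rw [hσc, LinearMap.map_smul, hσc, Complex.conj_conj] }
    have hA : A = f (-t) := by
      refine b.ext fun i => ?_
      show σ (f t (σ (b i))) = f (-t) (b i)
      rw [hfσb, LinearMap.map_smul, hσσ, hfb]
    have h : σ (f t (σ (σ z))) = f (-t) (σ z) := LinearMap.congr_fun hA (σ z)
    rw [hσσ] at h
    exact h
  -- interaction with B
  have hPinvb : ∀ i, Pinv (b i) = (μ i)⁻¹ • P (b i) := by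
    intro i
    have h1 : Pinv (Q (b i)) = P (b i) := by
      show Pinv (P (P (b i))) = P (b i)
      rw [hPinvP]
    rw [hQb' i, LinearMap.map_smul_of_tower] at h1
    simpa [smul_smul, inv_mul_cancel₀ (hμpos i).ne'] using
      congrArg (fun v => (μ i)⁻¹ • v) h1
  have hBf : ∀ (t : ℝ) x y, B (f t x) y = B x (f (-t) y) := by
    intro t x y
    have hmaps : B ∘ₗ (f t) = LinearMap.compl₂ B (f (-t)) := by
      refine LinearMap.ext_basis b b fun i j => ?_
      rw [LinearMap.comp_apply, LinearMap.compl₂_apply, hfb, hfb,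
        LinearMap.map_smul_of_tower, LinearMap.smul_apply, LinearMap.map_smul_of_tower]
      have hkey : B (b i) (b j) = 0 ∨ μ i = (μ j)⁻¹ := by
        have h1 : B (Q (b i)) (b j) = B (b i) (Pinv (Pinv (b j))) := hBQ _ _
        rw [hQb' i, hPinvb j] at h1
        simp only [LinearMap.map_smul_of_tower, LinearMap.smul_apply, hPinvP] at h1
        have h2 : (μ i - (μ j)⁻¹) • B (b i) (b j) = 0 := by
          rw [sub_smul, h1, sub_self]
        rcases smul_eq_zero.mp h2 with h | h
        · right; linarith [sub_eq_zero.mp (by exact_mod_cast h)]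
        · left; exact h
      rcases hkey with h | h
      · rw [h, smul_zero, smul_zero]
      · rw [h, Real.inv_rpow (hμpos j).le, ← Real.rpow_neg (hμpos j).le]
    have h := LinearMap.congr_fun (LinearMap.congr_fun hmaps x) y
    rwa [LinearMap.comp_apply, LinearMap.compl₂_apply] at h
  -- f t is a Lie algebra endomorphism
  have hQlie : ∀ x y, Q ⁅x, y⁆ = ⁅Q x, Q y⁆ := by
    intro x y
    show σ (τ (σ (τ ⁅x, y⁆))) = _
    rw [hτlie, hσlie, hτlie, hσlie]
    rfl
  have hflie : ∀ (t : ℝ) x y, f t ⁅x, y⁆ = ⁅f t x, f t y⁆ := by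
    intro t
    have hpair : ∀ i j, f t ⁅b i, b j⁆ = ⁅f t (b i), f t (b j)⁆ := by
      intro i j
      have hQij : Q ⁅b i, b j⁆ = (μ i * μ j) • ⁅b i, b j⁆ := by
        rw [hQlie, hQb' i, hQb' j, smul_lie, lie_smul, smul_smul]
      rw [eig_pow t _ _ hQij, hfb, hfb, Real.mul_rpow (hμpos i).le (hμpos j).le,
        smul_lie, lie_smul, smul_smul]
    have step1 : ∀ j x, f t ⁅x, b j⁆ = ⁅f t x, f t (b j)⁆ := by
      intro j
      let rb : L → (L →ₗ[ℂ] L) := fun w =>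
        { toFun := fun x => ⁅x, w⁆,
          map_add' := fun a c => add_lie a c w,
          map_smul' := fun c a => smul_lie c a w }
      have hmaps : (f t) ∘ₗ rb (b j) = (rb (f t (b j))) ∘ₗ (f t) :=
        b.ext fun i => hpair i j
      intro x
      exact LinearMap.congr_fun hmaps x
    intro x y
    let lb : L → (L →ₗ[ℂ] L) := fun w =>
      { toFun := fun yy => ⁅w, yy⁆,
        map_add' := fun a c => lie_add w a c,
        map_smul' := fun c a => lie_smul c w a }
    have hmaps : (f t) ∘ₗ lb x = (lb (f t x)) ∘ₗ (f t) :=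
      b.ext fun j => step1 j x
    exact LinearMap.congr_fun hmaps y
  -- the aligned conjugation
  set d : ℝ := 1/4 with hd
  let τ' : L →ₗ[ℝ] L := ((f d).restrictScalars ℝ) ∘ₗ τ ∘ₗ ((f (-d)).restrictScalars ℝ)
  have hτ'app : ∀ z, τ' z = f d (τ (f (-d) z)) := fun z => rfl
  have c1 : ∀ z, τ' (τ' z) = z := by
    intro z
    rw [hτ'app, hτ'app, hf_cancel d, hττ, hf_cancel' d]
  have c2 : ∀ z, τ' (Complex.I • z) = -(Complex.I • τ' z) := by
    intro z
    rw [hτ'app, hτ'app, LinearMap.map_smul, hτI, map_neg, LinearMap.map_smul]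
  have c3 : ∀ x y, τ' ⁅x, y⁆ = ⁅τ' x, τ' y⁆ := by
    intro x y
    rw [hτ'app, hτ'app, hτ'app, hflie, hτlie, hflie]
  have c4 : ∀ x y, B (τ' x) (τ' y) = (starRingEnd ℂ) (B x y) := by
    intro x y
    have hstep : B (f (-d) x) (f (-d) y) = B x y := by
      have h := hBf (-d) x (f (-d) y)
      rw [neg_neg, hf_cancel' d] at h
      exact h
    calc B (τ' x) (τ' y)
        = B (f d (τ (f (-d) x))) (f d (τ (f (-d) y))) := by rw [hτ'app, hτ'app]
      _ = B (τ (f (-d) x)) (f (-d) (f d (τ (f (-d) y)))) := hBf d _ _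
      _ = B (τ (f (-d) x)) (τ (f (-d) y)) := by rw [hf_cancel d]
      _ = (starRingEnd ℂ) (B (f (-d) x) (f (-d) y)) := hτB _ _
      _ = (starRingEnd ℂ) (B x y) := by rw [hstep]
  have c5 : ∀ z : L, z ≠ 0 → 0 < (B z (τ' z)).re := by
    intro z hz
    have hne : f (-d) z ≠ 0 := by
      intro h0
      exact hz (by rw [← hf_cancel' d z, h0, map_zero])
    have h1 : B z (τ' z) = B (f (-d) z) (τ (f (-d) z)) := by
      have h := hBf (-d) z (τ (f (-d) z))
      rw [neg_neg] at h
      rw [hτ'app]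
      exact h.symm
    rw [h1]
    exact hτpos _ hne
  have c6 : ∀ z, σ (τ' z) = τ' (σ z) := by
    intro z
    have hPb : ∀ i, Q (P (b i)) = μ i • P (b i) := by
      intro i
      have : Q (P (b i)) = P (Q (b i)) := rfl
      rw [this, hQb' i, LinearMap.map_smul_of_tower]
    have claim : (f (-d)) ∘ₗ P ∘ₗ (f (-d)) = (f d) ∘ₗ Pinv ∘ₗ (f d) := by
      refine b.ext fun i => ?_
      have hfP : f (-d) (P (b i)) = (μ i ^ (-d)) • P (b i) := eig_pow (-d) (μ i) _ (hPb i)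
      have hfP' : f d (P (b i)) = (μ i ^ d) • P (b i) := eig_pow d (μ i) _ (hPb i)
      have hsc : μ i ^ (-d) * μ i ^ (-d) = μ i ^ d * ((μ i)⁻¹ * μ i ^ d) := by
        rw [← Real.rpow_neg_one (μ i), ← Real.rpow_add (hμpos i),
          ← Real.rpow_add (hμpos i), ← Real.rpow_add (hμpos i)]
        norm_num
      calc (f (-d)) (P (f (-d) (b i)))
          = (μ i ^ (-d)) • f (-d) (P (b i)) := by
            rw [hfb, LinearMap.map_smul_of_tower, LinearMap.map_smul_of_tower]
        _ = ((μ i ^ (-d)) * (μ i ^ (-d))) • P (b i) := by rw [hfP, smul_smul]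
        _ = ((μ i ^ d) * ((μ i)⁻¹ * (μ i ^ d))) • P (b i) := by rw [hsc]
        _ = (f d) (Pinv (f d (b i))) := by
            simp only [hfb, LinearMap.map_smul_of_tower, hPinvb i, hfP', smul_smul]
            module
    have hclaim : f (-d) (P (f (-d) z)) = f d (Pinv (f d z)) := LinearMap.congr_fun claim z
    -- LHS of goal
    have hL : σ (τ' z) = f (-d) (P (f (-d) z)) := by
      rw [hτ'app, hσf d]
      rfl
    have hR : τ' (σ z) = f d (Pinv (f d z)) := by
      rw [hτ'app]
      have h := hσf d z
      have h2 : f (-d) (σ z) = σ (f d z) := h.symm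
      rw [h2]
      rfl
    rw [hL, hR]
    exact hclaim
  exact ⟨τ', c1, c2, c3, c4, c5, c6⟩


/-- If `g` is a real slice of `(L, B)` and there exists a compact real form
of `(L, B)`, then there exists a Cartan involution of Lie algebras of `B|g`. -/
theorem exists_cartanInvolution_of_exists_compactRealForm [FiniteDimensional ℂ L]
    (B : LinearMap.BilinForm ℂ L) (hBsymm : ∀ x y : L, B x y = B y x)
    (hBnd : B.Nondegenerate) (g u : LieSubalgebra ℝ L)
    (hg : IsRealSlice B g) (hu : IsCompactRealForm B u) :
    ∃ θ : ↥g →ₗ[ℝ] ↥g, IsCartanInvolutionOfLieAlgebras B g θ := by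
  obtain ⟨σ, keyσ, hσσ, hσI, hσfix, hσlie, hσB⟩ := exists_conj B g hg
  obtain ⟨τ, keyτ, hττ, hτI, hτfix, hτlie, hτB⟩ := exists_conj B u hu.1
  have hτpos : ∀ z : L, z ≠ 0 → 0 < (B z (τ z)).re := by
    intro z hz
    obtain ⟨x, hx, y, hy, hzd⟩ := hu.1.1.2 z
    have hτz : τ z = x - Complex.I • y := by rw [hzd, keyτ x y hx hy]
    have hexp : B z (τ z) = B x x + B y y + Complex.I * (B y x - B x y) := by
      rw [hτz, hzd]
      simp only [map_add, map_sub, LinearMap.map_smul, LinearMap.add_apply, LinearMap.sub_apply,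
        LinearMap.smul_apply, smul_eq_mul]
      linear_combination (-(B y) y) * Complex.I_sq
    have hre : (B z (τ z)).re = (B x x).re + (B y y).re := by
      rw [hexp, hBsymm y x, sub_self, mul_zero, add_zero, Complex.add_re]
    rw [hre]
    have hxym : ¬(x = 0 ∧ y = 0) := by
      rintro ⟨hx0, hy0⟩
      exact hz (by rw [hzd, hx0, hy0, smul_zero, add_zero])
    rcases eq_or_ne x 0 with hx0 | hx0
    · have hy0 : y ≠ 0 := fun h => hxym ⟨hx0, h⟩
      rw [hx0]
      simpa using hu.2 y hy hy0
    · have h1 : 0 < (B x x).re := hu.2 x hx hx0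
      have h2 : 0 ≤ (B y y).re := by
        rcases eq_or_ne y 0 with h | h
        · rw [h]; simp
        · exact (hu.2 y hy h).le
      linarith
  obtain ⟨τ', c1, c2, c3, c4, c5, c6⟩ :=
    exists_aligned_conj B hBsymm σ τ hσσ hσI hσlie hσB hττ hτI hτlie hτB hτpos
  have hmem : ∀ x : ↥g, τ' (x : L) ∈ g := by
    intro x
    have hfx : σ (x : L) = x := (hσfix _).mpr x.2
    have h : σ (τ' (x : L)) = τ' (x : L) := by rw [c6, hfx]
    exact (hσfix _).mp h
  let θ : ↥g →ₗ[ℝ] ↥g :=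
    { toFun := fun x => ⟨τ' (x : L), hmem x⟩,
      map_add' := by intro a c; ext; simp,
      map_smul' := by intro r a; exact Subtype.ext (τ'.map_smul r (a : L)) }
  have hθapp : ∀ x : ↥g, (θ x : L) = τ' (x : L) := fun x => rfl
  have hgreal : ∀ a b : L, a ∈ g → b ∈ g → (starRingEnd ℂ) (B a b) = B a b :=
    fun a b' ha hb => Complex.conj_eq_iff_im.mpr (hg.2 a ha b' hb)
  refine ⟨θ, ⟨⟨?_, ?_, ?_⟩, ?_⟩⟩
  · intro x
    apply Subtype.ext
    rw [hθapp, hθapp, c1]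
  · intro x y
    have h1 : B (τ' (x : L)) (y : L) = (starRingEnd ℂ) (B (x : L) (τ' (y : L))) := by
      calc B (τ' (x : L)) (y : L) = B (τ' (x : L)) (τ' (τ' (y : L))) := by rw [c1]
        _ = (starRingEnd ℂ) (B (x : L) (τ' (y : L))) := c4 _ _
    rw [hθapp, hθapp, h1, hgreal _ _ x.2 (hmem y)]
  · intro x hx
    have hxne : (x : L) ≠ 0 := fun h => hx (Subtype.ext h)
    rw [hθapp]
    exact c5 _ hxne
  · intro x y
    apply Subtype.ext
    rw [hθapp]
    show τ' ((⁅x, y⁆ : ↥g) : L) = ((⁅θ x, θ y⁆ : ↥g) : L)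
    rw [LieSubalgebra.coe_bracket, LieSubalgebra.coe_bracket, c3, hθapp, hθapp]
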